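/- arXiv:2603.21492 — 3 statements merged into one kernel-verified Lean document; each statement's English description precedes it below -/
import Mathlib

section
/- For every point (p_1,…,p_K) ∈ ∏_{k=1}^K Δ_{n_k}, every k ∈ {1,…,K} and every m ∈ {1,…,n_k}, the first-order partial derivative of the Multinoulli Extension satisfies ∂F/∂p_k^m (p_1,…,p_K) = B_k · E[ f( v_k^m | ∪_{(k̂,b̂) ≠ (k,1)} {e_{k̂}^{b̂}} ) ], where the union ranges over all pairs (k̂,b̂) with k̂ ∈ {1,…,K}, b̂ ∈ {1,…,B_{k̂}} except (k̂,b̂) = (k,1), the random elements e_{k̂}^{b̂} are mutually independent with e_{k̂}^{b̂} ∼ Multi(p_{k̂}), and a draw of ∅ contributes no element to the union. -/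
open Finset

noncomputable section

namespace Multinoulli

variable {K : ℕ}

/-- An element of the ground set `V`: a community index `k` together with the
index `m` of the element `v_k^m` inside its community `V_k`. -/
abbrev Elem (n : Fin K → ℕ) := Σ k : Fin K, Fin (n k)

/-- A sampling slot: a community `k` together with a trial index `b ∈ {1,…,B_k}`. -/
abbrev Slot (B : Fin K → ℕ) := Σ k : Fin K, Fin (B k)

/-- A joint outcome of all the independent multinoulli trials; `none` encodes a
draw of `∅`, which contributes no element. -/
abbrev Choice (n B : Fin K → ℕ) := ∀ s : Slot B, Option (Fin (n s.1))

/-- The probability that `Multi(p_k)` (the `k`-th block of `x`) assigns to a given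
outcome: `x ⟨k,m⟩` for the element `v_k^m` and `1 - Σ_m x ⟨k,m⟩` for `∅`. -/
def prob (n : Fin K → ℕ) (x : Elem n → ℝ) (k : Fin K) : Option (Fin (n k)) → ℝ
  | some m => x ⟨k, m⟩
  | none => 1 - ∑ m : Fin (n k), x ⟨k, m⟩

/-- The probability of the joint outcome `e` (all trials are mutually independent). -/
def jointProb (n B : Fin K → ℕ) (x : Elem n → ℝ) (e : Choice n B) : ℝ :=
  ∏ s : Slot B, prob n x s.1 (e s)

/-- The subset of the ground set selected by the trials whose slot lies in `A`
(a draw of `∅` contributes no element to the union). -/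
def chosen (n B : Fin K → ℕ) (e : Choice n B) (A : Finset (Slot B)) : Finset (Elem n) :=
  A.biUnion fun s => ((e s).map fun m => (⟨s.1, m⟩ : Elem n)).toFinset

/-- The Multinoulli Extension `F` of the set function `f`:
`F(x) = E[f(∪_{k,b} {e_k^b})]` for mutually independent `e_k^b ∼ Multi(p_k)`. -/
def ME (n B : Fin K → ℕ) (f : Finset (Elem n) → ℝ) (x : Elem n → ℝ) : ℝ :=
  ∑ e : Choice n B, f (chosen n B e Finset.univ) * jointProb n B x e

/-- The first-order partial derivative `∂G/∂x_i` at `x`. -/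
def pderiv (n : Fin K → ℕ) (G : (Elem n → ℝ) → ℝ) (i : Elem n) (x : Elem n → ℝ) : ℝ :=
  deriv (fun t => G (Function.update x i t)) (x i)

/-- The gradient `∇G(x)`. -/
def grad (n : Fin K → ℕ) (G : (Elem n → ℝ) → ℝ) (x : Elem n → ℝ) : Elem n → ℝ :=
  fun i => pderiv n G i x

/-- The second-order partial derivative `∂²G/∂x_i∂x_j` at `x`. -/
def pderiv2 (n : Fin K → ℕ) (G : (Elem n → ℝ) → ℝ) (i j : Elem n) (x : Elem n → ℝ) : ℝ :=
  pderiv n (fun y => pderiv n G j y) i x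

/-- The Euclidean inner product on `∏_k ℝ^{n_k}`. -/
def inner' (n : Fin K → ℕ) (u v : Elem n → ℝ) : ℝ := ∑ i : Elem n, u i * v i

/-- Membership in the product of simplices `∏_{k=1}^K Δ_{n_k}`. -/
def InSimplex (n : Fin K → ℕ) (x : Elem n → ℝ) : Prop :=
  (∀ i, 0 ≤ x i) ∧ ∀ k : Fin K, ∑ m : Fin (n k), x ⟨k, m⟩ ≤ 1

/-- Feasibility for the partition constraint: `|S ∩ V_k| ≤ B_k` for all `k`. -/
def Feasible (n B : Fin K → ℕ) (S : Finset (Elem n)) : Prop :=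
  ∀ k : Fin K, (S.filter fun i => i.1 = k).card ≤ B k

/-- Monotonicity of a set function. -/
def MonotoneSet (n : Fin K → ℕ) (f : Finset (Elem n) → ℝ) : Prop :=
  ∀ A B : Finset (Elem n), A ⊆ B → f A ≤ f B

/-- The marginal contribution `f(v|A) = f(A ∪ {v}) - f(A)`. -/
def marg (n : Fin K → ℕ) (f : Finset (Elem n) → ℝ) (v : Elem n) (A : Finset (Elem n)) : ℝ :=
  f (insert v A) - f A

/-- `α`-weak DR-submodularity: `f(v|A) ≥ α·f(v|B)` for all `A ⊆ B` and `v ∉ B`. -/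
def WeaklyDR (n : Fin K → ℕ) (f : Finset (Elem n) → ℝ) (α : ℝ) : Prop :=
  ∀ A B : Finset (Elem n), A ⊆ B → ∀ v, v ∉ B → α * marg n f v B ≤ marg n f v A

/-- `γ`-weak submodularity from below. -/
def WeaklyBelow (n : Fin K → ℕ) (f : Finset (Elem n) → ℝ) (γ : ℝ) : Prop :=
  ∀ A B : Finset (Elem n), A ⊆ B → γ * (f B - f A) ≤ ∑ v ∈ B \ A, marg n f v A

/-- `β`-weak submodularity from above. -/
def WeaklyAbove (n : Fin K → ℕ) (f : Finset (Elem n) → ℝ) (β : ℝ) : Prop :=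
  ∀ A B : Finset (Elem n), A ⊆ B → ∑ v ∈ B \ A, marg n f v (B.erase v) ≤ β * (f B - f A)

/-- The scaled indicator vector `Σ_{k=1}^K (1/B_k)·1_{S∩V_k}`. -/
def indVec (n B : Fin K → ℕ) (S : Finset (Elem n)) : Elem n → ℝ :=
  fun i => if i ∈ S then ((B i.1 : ℝ))⁻¹ else 0

section Aux

variable (n B : Fin K → ℕ)

/-- Derivative coefficient of a single multinoulli factor w.r.t. `x i`. -/
def dcoef (i : Elem n) (k' : Fin K) : Option (Fin (n k')) → ℝ
  | some m' => if (⟨k', m'⟩ : Elem n) = i then 1 else 0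
  | none => if k' = i.1 then -1 else 0

lemma dcoef_eq_zero {i : Elem n} {k' : Fin K} (h : k' ≠ i.1) (o : Option (Fin (n k'))) :
    dcoef n i k' o = 0 := by
  cases o with
  | some m' =>
    rw [dcoef, if_neg]
    intro hc; exact h (congrArg Sigma.fst hc)
  | none => rw [dcoef, if_neg h]

lemma hasDerivAt_prob (x : Elem n → ℝ) (i : Elem n) (k' : Fin K)
    (o : Option (Fin (n k'))) (t : ℝ) :
    HasDerivAt (fun t => prob n (Function.update x i t) k' o) (dcoef n i k' o) t := by
  cases o with
  | some m' =>
    simp only [prob, dcoef, Function.update_apply]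
    by_cases h : (⟨k', m'⟩ : Elem n) = i
    · simpa [h] using hasDerivAt_id' t
    · simpa [h] using hasDerivAt_const t (x ⟨k', m'⟩)
  | none =>
    simp only [prob, dcoef]
    have h1 : HasDerivAt (fun t => ∑ m' : Fin (n k'), Function.update x i t ⟨k', m'⟩)
        (∑ m' : Fin (n k'), if (⟨k', m'⟩ : Elem n) = i then (1:ℝ) else 0) t := by
      apply HasDerivAt.fun_sum
      intro m' _
      simp only [Function.update_apply]
      by_cases h : (⟨k', m'⟩ : Elem n) = i
      · simpa [h] using hasDerivAt_id' t
      · simpa [h] using hasDerivAt_const t (x ⟨k', m'⟩)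
    have h2 : (∑ m' : Fin (n k'), if (⟨k', m'⟩ : Elem n) = i then (1:ℝ) else 0)
        = if k' = i.1 then 1 else 0 := by
      obtain ⟨ki, mi⟩ := i
      by_cases h : k' = ki
      · subst h
        simp [Sigma.mk.inj_iff]
      · rw [if_neg h, Finset.sum_eq_zero]
        intro m' _
        rw [if_neg]
        intro hc; exact h (congrArg Sigma.fst hc)
    rw [h2] at h1
    by_cases h : k' = i.1
    · simpa [h] using (hasDerivAt_const t (1:ℝ)).fun_sub h1
    · simpa [h] using (hasDerivAt_const t (1:ℝ)).fun_sub h1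

lemma hasDerivAt_jointProb (x : Elem n → ℝ) (i : Elem n) (e : Choice n B) :
    HasDerivAt (fun t => jointProb n B (Function.update x i t) e)
      (∑ s : Slot B, (∏ s' ∈ Finset.univ.erase s, prob n x s'.1 (e s'))
        * dcoef n i s.1 (e s)) (x i) := by
  have h := HasDerivAt.fun_finsetProd (u := Finset.univ)
    (f := fun (s : Slot B) t => prob n (Function.update x i t) s.1 (e s))
    (f' := fun s => dcoef n i s.1 (e s)) (x := x i)
    (fun s _ => hasDerivAt_prob n x i s.1 (e s) (x i))
  simpa [jointProb, Function.update_eq_self, smul_eq_mul] using h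

lemma hasDerivAt_ME (f : Finset (Elem n) → ℝ) (x : Elem n → ℝ) (i : Elem n) :
    HasDerivAt (fun t => ME n B f (Function.update x i t))
      (∑ e : Choice n B, f (chosen n B e Finset.univ) *
        ∑ s : Slot B, (∏ s' ∈ Finset.univ.erase s, prob n x s'.1 (e s'))
          * dcoef n i s.1 (e s)) (x i) := by
  apply HasDerivAt.fun_sum
  intro e _
  exact (hasDerivAt_jointProb n B x i e).const_mul _

end Aux

section Main

variable (n B : Fin K → ℕ)

lemma mem_chosen {i : Elem n} {e : Choice n B} {A : Finset (Slot B)} :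
    i ∈ chosen n B e A ↔
      ∃ s ∈ A, ∃ m' : Fin (n s.1), e s = some m' ∧ (⟨s.1, m'⟩ : Elem n) = i := by
  simp only [chosen, Finset.mem_biUnion, Option.mem_toFinset, Option.mem_map]
  constructor
  · rintro ⟨s, hs, m', hm, hi⟩
    exact ⟨s, hs, m', hm, hi⟩
  · rintro ⟨s, hs, m', hm, hi⟩
    exact ⟨s, hs, m', hm, hi⟩

lemma chosen_congr {e e' : Choice n B} {A : Finset (Slot B)} (h : ∀ s ∈ A, e s = e' s) :
    chosen n B e A = chosen n B e' A :=
  Finset.biUnion_congr rfl (fun s hs => by rw [h s hs])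

lemma chosen_insert (e : Choice n B) (s : Slot B) (A : Finset (Slot B)) :
    chosen n B e (insert s A)
      = ((e s).map fun m' => (⟨s.1, m'⟩ : Elem n)).toFinset ∪ chosen n B e A :=
  Finset.biUnion_insert

/-- Exchange the outcomes of the two slots `⟨k,b⟩` and `⟨k,b0⟩`. -/
def swapC (k : Fin K) (b b0 : Fin (B k)) (e : Choice n B) : Choice n B :=
  Function.update (Function.update e ⟨k, b0⟩ (e ⟨k, b⟩)) ⟨k, b⟩ (e ⟨k, b0⟩)

lemma swapC_q (k : Fin K) (b b0 : Fin (B k)) (e : Choice n B) :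
    swapC n B k b b0 e ⟨k, b⟩ = e ⟨k, b0⟩ :=
  Function.update_self _ _ _

lemma swapC_p (k : Fin K) {b b0 : Fin (B k)} (h : b0 ≠ b) (e : Choice n B) :
    swapC n B k b b0 e ⟨k, b0⟩ = e ⟨k, b⟩ := by
  have h' : (⟨k, b0⟩ : Slot B) ≠ ⟨k, b⟩ := by simpa using h
  rw [swapC, Function.update_of_ne h', Function.update_self]

lemma swapC_other (k : Fin K) (b b0 : Fin (B k)) (e : Choice n B) {s : Slot B}
    (h1 : s ≠ ⟨k, b⟩) (h2 : s ≠ ⟨k, b0⟩) :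
    swapC n B k b b0 e s = e s := by
  rw [swapC, Function.update_of_ne h1, Function.update_of_ne h2]

lemma swapC_self (k : Fin K) (b : Fin (B k)) (e : Choice n B) :
    swapC n B k b b e = e := by
  funext s
  by_cases h : s = ⟨k, b⟩
  · subst h; rw [swapC_q]
  · exact swapC_other n B k b b e h h

lemma swapC_invol (k : Fin K) (b b0 : Fin (B k)) (e : Choice n B) :
    swapC n B k b b0 (swapC n B k b b0 e) = e := by
  by_cases hbb : b = b0
  · subst hbb; rw [swapC_self, swapC_self]
  · funext s
    by_cases h1 : s = ⟨k, b⟩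
    · subst h1
      rw [swapC_q]; exact swapC_p n B k (fun h => hbb h.symm) e
    · by_cases h2 : s = ⟨k, b0⟩
      · subst h2
        rw [swapC_p n B k (fun h => hbb h.symm), swapC_q]
      · rw [swapC_other n B k b b0 _ h1 h2, swapC_other n B k b b0 _ h1 h2]

lemma chosen_swap (k : Fin K) (b b0 : Fin (B k)) (e : Choice n B) :
    chosen n B (swapC n B k b b0 e) Finset.univ = chosen n B e Finset.univ := by
  by_cases hbb : b = b0
  · subst hbb; rw [swapC_self]
  have hq : ∀ e : Choice n B, swapC n B k b b0 e ⟨k, b⟩ = e ⟨k, b0⟩ := swapC_q n B k b b0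
  have hp : ∀ e : Choice n B, swapC n B k b b0 e ⟨k, b0⟩ = e ⟨k, b⟩ :=
    swapC_p n B k (fun h => hbb h.symm)
  ext i
  simp only [mem_chosen]
  constructor
  · rintro ⟨s, -, m', hm, rfl⟩
    by_cases h1 : s = ⟨k, b⟩
    · subst h1
      rw [hq] at hm
      exact ⟨⟨k, b0⟩, Finset.mem_univ _, m', hm, rfl⟩
    · by_cases h2 : s = ⟨k, b0⟩
      · subst h2
        rw [hp] at hm
        exact ⟨⟨k, b⟩, Finset.mem_univ _, m', hm, rfl⟩
      · rw [swapC_other n B k b b0 e h1 h2] at hm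
        exact ⟨s, Finset.mem_univ _, m', hm, rfl⟩
  · rintro ⟨s, -, m', hm, rfl⟩
    by_cases h1 : s = ⟨k, b⟩
    · subst h1
      exact ⟨⟨k, b0⟩, Finset.mem_univ _, m', by rw [hp, hm], rfl⟩
    · by_cases h2 : s = ⟨k, b0⟩
      · subst h2
        exact ⟨⟨k, b⟩, Finset.mem_univ _, m', by rw [hq, hm], rfl⟩
      · exact ⟨s, Finset.mem_univ _, m', by rw [swapC_other n B k b b0 e h1 h2, hm], rfl⟩

end Main

section Main2

variable (n B : Fin K → ℕ)

lemma prod_swap (x : Elem n → ℝ) (k : Fin K) {b b0 : Fin (B k)} (hbb : b ≠ b0)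
    (e : Choice n B) :
    (∏ s' ∈ Finset.univ.erase ⟨k, b0⟩, prob n x s'.1 (swapC n B k b b0 e s'))
      = ∏ s' ∈ Finset.univ.erase ⟨k, b⟩, prob n x s'.1 (e s') := by
  have hpq : (⟨k, b⟩ : Slot B) ≠ ⟨k, b0⟩ := by simpa using hbb
  have hq : (⟨k, b⟩ : Slot B) ∈ Finset.univ.erase (⟨k, b0⟩ : Slot B) :=
    Finset.mem_erase.mpr ⟨hpq, Finset.mem_univ _⟩
  have hp : (⟨k, b0⟩ : Slot B) ∈ Finset.univ.erase (⟨k, b⟩ : Slot B) :=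
    Finset.mem_erase.mpr ⟨Ne.symm hpq, Finset.mem_univ _⟩
  have hset : ((Finset.univ.erase (⟨k, b⟩ : Slot B)).erase ⟨k, b0⟩)
      = ((Finset.univ.erase (⟨k, b0⟩ : Slot B)).erase ⟨k, b⟩) := Finset.erase_right_comm
  rw [← Finset.mul_prod_erase _ _ hq, ← Finset.mul_prod_erase _ _ hp, swapC_q, hset]
  refine congrArg₂ (· * ·) rfl (Finset.prod_congr rfl fun s hs => ?_)
  obtain ⟨hs1, hs2⟩ := Finset.mem_erase.mp hs
  rw [swapC_other n B k b b0 e hs1 (Finset.mem_erase.mp hs2).1]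

lemma sum_term_swap (x : Elem n → ℝ) (f : Finset (Elem n) → ℝ) (k : Fin K) (m : Fin (n k))
    (b b0 : Fin (B k)) :
    (∑ e : Choice n B, f (chosen n B e Finset.univ) *
        ((∏ s' ∈ Finset.univ.erase ⟨k, b⟩, prob n x s'.1 (e s'))
          * dcoef n ⟨k, m⟩ k (e ⟨k, b⟩)))
    = ∑ e : Choice n B, f (chosen n B e Finset.univ) *
        ((∏ s' ∈ Finset.univ.erase ⟨k, b0⟩, prob n x s'.1 (e s'))
          * dcoef n ⟨k, m⟩ k (e ⟨k, b0⟩)) := by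
  by_cases hbb : b = b0
  · subst hbb; rfl
  have hbij : Function.Bijective (swapC n B k b b0) :=
    Function.Involutive.bijective (swapC_invol n B k b b0)
  refine Fintype.sum_bijective _ hbij _ _ (fun e => ?_)
  rw [chosen_swap, prod_swap n B x k hbb e, swapC_p n B k (fun h => hbb h.symm)]

lemma group (x : Elem n → ℝ) (f : Finset (Elem n) → ℝ) (k : Fin K) (m : Fin (n k))
    (b0 : Fin (B k)) :
    (∑ e : Choice n B, f (chosen n B e Finset.univ) *
        ((∏ s' ∈ Finset.univ.erase ⟨k, b0⟩, prob n x s'.1 (e s'))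
          * dcoef n ⟨k, m⟩ k (e ⟨k, b0⟩)))
    = ∑ e : Choice n B, marg n f ⟨k, m⟩ (chosen n B e (Finset.univ.erase ⟨k, b0⟩))
        * jointProb n B x e := by
  classical
  have L : ∀ (F : Choice n B → ℝ), (∑ e : Choice n B, F e)
      = ∑ r : (∀ j : {j : Slot B // j ≠ (⟨k, b0⟩ : Slot B)}, Option (Fin (n j.1.1))),
          ∑ o : Option (Fin (n k)),
          F ((Equiv.piSplitAt (⟨k, b0⟩ : Slot B)
              (fun s : Slot B => Option (Fin (n s.1)))).symm (o, r)) := by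
    intro F
    rw [← Equiv.sum_comp (Equiv.piSplitAt (⟨k, b0⟩ : Slot B)
      (fun s : Slot B => Option (Fin (n s.1)))).symm F, Fintype.sum_prod_type_right]
  rw [L, L]
  refine Finset.sum_congr rfl fun r _ => ?_
  set E := (Equiv.piSplitAt (⟨k, b0⟩ : Slot B)
      (fun s : Slot B => Option (Fin (n s.1)))).symm with hE
  have happ : ∀ (o : Option (Fin (n k))) (s : Slot B) (h : s ≠ (⟨k, b0⟩ : Slot B)),
      E (o, r) s = r ⟨s, h⟩ := by
    intro o s h
    simp [hE, Equiv.piSplitAt_symm_apply, dif_neg h]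
  have happ_p : ∀ o : Option (Fin (n k)), E (o, r) ⟨k, b0⟩ = o := by
    intro o
    simp [hE, Equiv.piSplitAt_symm_apply]
  set C := chosen n B (E (none, r)) (Finset.univ.erase ⟨k, b0⟩) with hC0
  set P := ∏ s' ∈ Finset.univ.erase (⟨k, b0⟩ : Slot B), prob n x s'.1 (E (none, r) s') with hP0
  have hP : ∀ o : Option (Fin (n k)),
      (∏ s' ∈ Finset.univ.erase (⟨k, b0⟩ : Slot B), prob n x s'.1 (E (o, r) s')) = P := by
    intro o
    refine Finset.prod_congr rfl fun s hs => ?_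
    rw [happ o s (Finset.mem_erase.mp hs).1, happ none s (Finset.mem_erase.mp hs).1]
  have hC : ∀ o : Option (Fin (n k)),
      chosen n B (E (o, r)) (Finset.univ.erase ⟨k, b0⟩) = C := by
    intro o
    refine chosen_congr n B fun s hs => ?_
    rw [happ o s (Finset.mem_erase.mp hs).1, happ none s (Finset.mem_erase.mp hs).1]
  have hU : ∀ o : Option (Fin (n k)),
      chosen n B (E (o, r)) Finset.univ
        = (o.map fun m' => (⟨k, m'⟩ : Elem n)).toFinset ∪ C := by
    intro o
    conv_lhs => rw [← Finset.insert_erase (Finset.mem_univ (⟨k, b0⟩ : Slot B))]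
    rw [chosen_insert, happ_p o, hC o]
  have hJ : ∀ o : Option (Fin (n k)),
      jointProb n B x (E (o, r)) = prob n x k o * P := by
    intro o
    rw [jointProb, ← Finset.mul_prod_erase _ _ (Finset.mem_univ (⟨k, b0⟩ : Slot B)),
      happ_p o, hP o]
  calc (∑ o : Option (Fin (n k)), f (chosen n B (E (o, r)) Finset.univ) *
          ((∏ s' ∈ Finset.univ.erase (⟨k, b0⟩ : Slot B), prob n x s'.1 (E (o, r) s'))
            * dcoef n ⟨k, m⟩ k (E (o, r) ⟨k, b0⟩)))
      = ∑ o : Option (Fin (n k)),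
          f ((o.map fun m' => (⟨k, m'⟩ : Elem n)).toFinset ∪ C) * (P * dcoef n ⟨k, m⟩ k o) := by
        refine Finset.sum_congr rfl fun o _ => ?_
        rw [hU o, hP o, happ_p o]
    _ = ∑ o : Option (Fin (n k)),
          marg n f ⟨k, m⟩ C * (prob n x k o * P) := by
        rw [Fintype.sum_option, Fintype.sum_option]
        have h1 : (∑ m' : Fin (n k),
            f (((some m').map fun m'' => (⟨k, m''⟩ : Elem n)).toFinset ∪ C)
              * (P * dcoef n ⟨k, m⟩ k (some m')))
            = f (insert (⟨k, m⟩ : Elem n) C) * P := by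
          rw [Finset.sum_eq_single m]
          · simp [dcoef, ← Finset.insert_eq]
          · intro b _ hb
            have : ¬((⟨k, b⟩ : Elem n) = ⟨k, m⟩) := by simpa using hb
            simp [dcoef, this]
          · intro h; exact absurd (Finset.mem_univ m) h
        have h2 : (∑ m' : Fin (n k), marg n f ⟨k, m⟩ C * (prob n x k (some m') * P))
            = marg n f ⟨k, m⟩ C * ((∑ m' : Fin (n k), x ⟨k, m'⟩) * P) := by
          rw [Finset.sum_mul, Finset.mul_sum]
          rfl
        have h0 : dcoef n ⟨k, m⟩ k none = (-1 : ℝ) := by simp [dcoef]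
        rw [h1, h2, h0]
        simp only [Option.map_none, Option.toFinset_none, Finset.empty_union, prob, marg]
        ring
    _ = ∑ o : Option (Fin (n k)),
          marg n f ⟨k, m⟩ (chosen n B (E (o, r)) (Finset.univ.erase ⟨k, b0⟩))
            * jointProb n B x (E (o, r)) := by
        refine Finset.sum_congr rfl fun o _ => ?_
        rw [hC o, hJ o]

end Main2

lemma sum_slot (n B : Fin K → ℕ) (g : Slot B → ℝ) :
    ∑ s : Slot B, g s = ∑ k' : Fin K, ∑ b : Fin (B k'), g ⟨k', b⟩ := by
  rw [← Finset.univ_sigma_univ, Finset.sum_sigma]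

theorem multinoulliExtension_pderiv {K : ℕ} (n B : Fin K → ℕ) (hn : ∀ k, 1 ≤ n k)
    (hB : ∀ k, 0 < B k) (hBn : ∀ k, B k ≤ n k)
    (f : Finset (Elem n) → ℝ) (hf0 : ∀ S, 0 ≤ f S)
    (x : Elem n → ℝ) (hx : InSimplex n x) (k : Fin K) (m : Fin (n k)) :
    pderiv n (ME n B f) ⟨k, m⟩ x =
      (B k : ℝ) * ∑ e : Choice n B,
        marg n f ⟨k, m⟩ (chosen n B e (Finset.univ.erase (⟨k, ⟨0, hB k⟩⟩ : Slot B))) *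
          jointProb n B x e := by
  classical
  have hd := hasDerivAt_ME n B f x ⟨k, m⟩
  rw [pderiv, hd.deriv]
  conv_lhs => simp only [Finset.mul_sum]
  rw [Finset.sum_comm, sum_slot n B, Finset.sum_eq_single k]
  · calc (∑ b : Fin (B k), ∑ e : Choice n B, f (chosen n B e Finset.univ) *
          ((∏ s' ∈ Finset.univ.erase ⟨k, b⟩, prob n x s'.1 (e s'))
            * dcoef n ⟨k, m⟩ (⟨k, b⟩ : Slot B).1 (e ⟨k, b⟩)))
        = ∑ _b : Fin (B k), ∑ e : Choice n B,
            marg n f ⟨k, m⟩ (chosen n B e (Finset.univ.erase (⟨k, ⟨0, hB k⟩⟩ : Slot B)))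
              * jointProb n B x e := by
          refine Finset.sum_congr rfl fun b _ => ?_
          exact (sum_term_swap n B x f k m b ⟨0, hB k⟩).trans (group n B x f k m ⟨0, hB k⟩)
      _ = (B k : ℝ) * ∑ e : Choice n B,
            marg n f ⟨k, m⟩ (chosen n B e (Finset.univ.erase (⟨k, ⟨0, hB k⟩⟩ : Slot B)))
              * jointProb n B x e := by
          rw [Finset.sum_const, Finset.card_univ, Fintype.card_fin, nsmul_eq_mul]
  · intro k' _ hk'
    refine Finset.sum_eq_zero fun b _ => Finset.sum_eq_zero fun e _ => ?_
    have hz := dcoef_eq_zero n (i := (⟨k, m⟩ : Elem n))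
      (k' := ((⟨k', b⟩ : Slot B).1)) hk' (e ⟨k', b⟩)
    rw [hz, mul_zero, mul_zero]
  · intro h
    exact absurd (Finset.mem_univ k) h

end Multinoulli
end
end

section
/- If the set function f : 2^V → ℝ≥0 is monotone, then every first-order partial derivative of its Multinoulli Extension is nonnegative: ∂F/∂p_k^m (p_1,…,p_K) ≥ 0 for all (p_1,…,p_K) ∈ ∏_{k=1}^K Δ_{n_k}, all k ∈ {1,…,K} and all m ∈ {1,…,n_k}. -/
open Finset

noncomputable section

namespace Multinoulli

variable {K : ℕ}

/-! ### Auxiliary material for the proof -/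

/-- The slope of `prob n x k' o` as a function of the coordinate `x i`. -/
def dso (n : Fin K → ℕ) (i : Elem n) (k' : Fin K) (o : Option (Fin (n k'))) : ℝ :=
  if (o.map fun m' => (⟨k', m'⟩ : Elem n)) = some i then 1
  else if o = none ∧ k' = i.1 then -1 else 0

/-- The product of the probabilities of all slots other than `s`. -/
def Pout (n B : Fin K → ℕ) (x : Elem n → ℝ) (e : Choice n B) (s : Slot B) : ℝ :=
  ∏ s' ∈ Finset.univ.erase s, prob n x s'.1 (e s')

lemma upd_hasDerivAt (n : Fin K → ℕ) (x : Elem n → ℝ) (i j : Elem n) :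
    HasDerivAt (fun t => Function.update x i t j) (if j = i then 1 else 0) (x i) := by
  by_cases h : j = i
  · subst h
    simp only [if_pos rfl, Function.update_self]
    exact hasDerivAt_id _
  · simp only [if_neg h, Function.update_of_ne h]
    exact hasDerivAt_const _ _

lemma sum_ind (n : Fin K → ℕ) (k' k0 : Fin K) (m0 : Fin (n k0)) :
    (∑ m' : Fin (n k'), if (⟨k', m'⟩ : Elem n) = ⟨k0, m0⟩ then (1 : ℝ) else 0)
      = if k' = k0 then 1 else 0 := by
  by_cases hk : k' = k0
  · subst hk
    rw [if_pos rfl]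
    have h : ∀ m' : Fin (n k'), ((⟨k', m'⟩ : Elem n) = ⟨k', m0⟩) ↔ (m' = m0) := by
      intro m'; simp
    simp only [h]
    simp
  · rw [if_neg hk]
    apply Finset.sum_eq_zero
    intro m' _
    rw [if_neg]
    intro hcon
    exact hk (congrArg Sigma.fst hcon)

lemma prob_hasDerivAt (n : Fin K → ℕ) (x : Elem n → ℝ) (i : Elem n)
    (k' : Fin K) (o : Option (Fin (n k'))) :
    HasDerivAt (fun t => prob n (Function.update x i t) k' o) (dso n i k' o) (x i) := by
  cases o with
  | some m' =>
    simp only [prob, dso, Option.map_some, Option.some.injEq, reduceCtorEq, false_and, if_false]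
    exact upd_hasDerivAt n x i ⟨k', m'⟩
  | none =>
    simp only [prob, dso, Option.map_none, reduceCtorEq, if_false, true_and]
    obtain ⟨k0, m0⟩ := i
    have h1 : HasDerivAt (fun t => ∑ m' : Fin (n k'), Function.update x ⟨k0, m0⟩ t ⟨k', m'⟩)
        (∑ m' : Fin (n k'), if (⟨k', m'⟩ : Elem n) = ⟨k0, m0⟩ then (1 : ℝ) else 0)
        (x ⟨k0, m0⟩) :=
      HasDerivAt.fun_sum fun m' _ => upd_hasDerivAt n x ⟨k0, m0⟩ ⟨k', m'⟩
    have h2 := (hasDerivAt_const (x ⟨k0, m0⟩) (1 : ℝ)).fun_sub h1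
    rw [sum_ind] at h2
    refine h2.congr_deriv ?_
    by_cases hk : k' = k0 <;> simp [hk]

lemma prob_nonneg (n : Fin K → ℕ) (x : Elem n → ℝ) (hx : InSimplex n x)
    (k' : Fin K) (o : Option (Fin (n k'))) : 0 ≤ prob n x k' o := by
  cases o with
  | some m' => exact hx.1 _
  | none => exact sub_nonneg.2 (hx.2 k')

lemma Pout_nonneg (n B : Fin K → ℕ) (x : Elem n → ℝ) (hx : InSimplex n x)
    (e : Choice n B) (s : Slot B) : 0 ≤ Pout n B x e s :=
  Finset.prod_nonneg fun s' _ => prob_nonneg n x hx _ _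

lemma joint_hasDerivAt (n B : Fin K → ℕ) (x : Elem n → ℝ) (i : Elem n) (e : Choice n B) :
    HasDerivAt (fun t => jointProb n B (Function.update x i t) e)
      (∑ s : Slot B, Pout n B x e s * dso n i s.1 (e s)) (x i) := by
  have h := HasDerivAt.fun_finsetProd (u := (Finset.univ : Finset (Slot B)))
    (f := fun (s : Slot B) t => prob n (Function.update x i t) s.1 (e s))
    (f' := fun s => dso n i s.1 (e s)) (x := x i)
    (fun s _ => prob_hasDerivAt n x i s.1 (e s))
  simp only [Function.update_eq_self, smul_eq_mul] at h
  exact h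

lemma ME_hasDerivAt (n B : Fin K → ℕ) (f : Finset (Elem n) → ℝ) (x : Elem n → ℝ) (i : Elem n) :
    HasDerivAt (fun t => ME n B f (Function.update x i t))
      (∑ e : Choice n B, f (chosen n B e Finset.univ) *
        ∑ s : Slot B, Pout n B x e s * dso n i s.1 (e s)) (x i) :=
  HasDerivAt.fun_sum fun e _ => (joint_hasDerivAt n B x i e).const_mul _

lemma chosen_mono (n B : Fin K → ℕ) (e₁ e₂ : Choice n B) (A : Finset (Slot B))
    (h : ∀ s, e₁ s = e₂ s ∨ e₁ s = none) :
    chosen n B e₁ A ⊆ chosen n B e₂ A := by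
  intro v hv
  simp only [chosen, Finset.mem_biUnion] at hv ⊢
  obtain ⟨s, hs, hv⟩ := hv
  rcases h s with h' | h'
  · exact ⟨s, hs, h' ▸ hv⟩
  · rw [h'] at hv
    simp at hv

lemma dso_ne (n : Fin K → ℕ) (i : Elem n) (k' : Fin K) (o : Option (Fin (n k')))
    (h : k' ≠ i.1) : dso n i k' o = 0 := by
  unfold dso
  rw [if_neg, if_neg]
  · rintro ⟨-, h'⟩; exact h h'
  · cases o with
    | none => simp
    | some m' =>
      simp only [Option.map_some, Option.some.injEq]
      intro hcon
      exact h (congrArg Sigma.fst hcon)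

theorem multinoulliExtension_pderiv_nonneg {K : ℕ} (n B : Fin K → ℕ) (hn : ∀ k, 1 ≤ n k)
    (hB : ∀ k, 0 < B k) (hBn : ∀ k, B k ≤ n k)
    (f : Finset (Elem n) → ℝ) (hf0 : ∀ S, 0 ≤ f S)
    (hmono : MonotoneSet n f)
    (x : Elem n → ℝ) (hx : InSimplex n x) (k : Fin K) (m : Fin (n k)) :
    0 ≤ pderiv n (ME n B f) ⟨k, m⟩ x := by
  unfold pderiv
  rw [(ME_hasDerivAt n B f x ⟨k, m⟩).deriv]
  simp only [Finset.mul_sum]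
  rw [Finset.sum_comm]
  apply Finset.sum_nonneg
  rintro ⟨k', b⟩ -
  by_cases hk : k' = k
  · subst hk
    dsimp only
    rw [← Equiv.sum_comp (Equiv.piSplitAt (⟨k', b⟩ : Slot B) fun s' : Slot B =>
      Option (Fin (n s'.1))).symm]
    rw [Fintype.sum_prod_type, Finset.sum_comm]
    apply Finset.sum_nonneg
    intro g2 _
    set E := Equiv.piSplitAt (⟨k', b⟩ : Slot B) fun s' : Slot B => Option (Fin (n s'.1)) with hE
    have hE1 : ∀ a : Option (Fin (n k')), (E.symm (a, g2)) ⟨k', b⟩ = a := fun a =>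
      congrArg Prod.fst (E.apply_symm_apply (a, g2))
    have hE2 : ∀ (a a' : Option (Fin (n k'))) (s' : Slot B), s' ≠ ⟨k', b⟩ →
        E.symm (a, g2) s' = E.symm (a', g2) s' := by
      intro a a' s' h
      simp only [hE, Equiv.piSplitAt_symm_apply, dif_neg h]
    have hP : ∀ a : Option (Fin (n k')),
        Pout n B x (E.symm (a, g2)) ⟨k', b⟩ = Pout n B x (E.symm (none, g2)) ⟨k', b⟩ := by
      intro a
      unfold Pout
      exact Finset.prod_congr rfl fun s' hs' => by
        rw [hE2 a none s' (Finset.ne_of_mem_erase hs')]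
    have hsub : chosen n B (E.symm (none, g2)) Finset.univ ⊆
        chosen n B (E.symm (some m, g2)) Finset.univ := by
      apply chosen_mono
      intro s'
      by_cases h : s' = ⟨k', b⟩
      · subst h; right; exact hE1 none
      · left; exact hE2 none (some m) s' h
    have hdn : dso n ⟨k', m⟩ k' (none : Option (Fin (n k'))) = -1 := by simp [dso]
    have hdm : ∀ m' : Fin (n k'), dso n ⟨k', m⟩ k' (some m') = if m' = m then 1 else 0 := by
      intro m'
      by_cases h : m' = m
      · subst h; simp [dso]
      · simp [dso, h]
    have key : ∀ a : Option (Fin (n k')),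
        f (chosen n B (E.symm (a, g2)) Finset.univ) *
          (Pout n B x (E.symm (a, g2)) ⟨k', b⟩ *
            dso n ⟨k', m⟩ k' ((E.symm (a, g2)) ⟨k', b⟩)) =
        f (chosen n B (E.symm (a, g2)) Finset.univ) *
          (Pout n B x (E.symm (none, g2)) ⟨k', b⟩ * dso n ⟨k', m⟩ k' a) := by
      intro a
      rw [hE1 a, hP a]
    rw [Fintype.sum_option]
    rw [key none, hdn]
    have key2 : ∀ m' : Fin (n k'),
        f (chosen n B (E.symm (some m', g2)) Finset.univ) *
          (Pout n B x (E.symm (some m', g2)) ⟨k', b⟩ *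
            dso n ⟨k', m⟩ k' ((E.symm (some m', g2)) ⟨k', b⟩)) =
        if m' = m then f (chosen n B (E.symm (some m, g2)) Finset.univ) *
          Pout n B x (E.symm (none, g2)) ⟨k', b⟩ else 0 := by
      intro m'
      rw [key (some m'), hdm m']
      by_cases h : m' = m
      · subst h; simp
      · simp [h]
    simp only [key2]
    rw [Finset.sum_ite_eq' Finset.univ m]
    simp only [Finset.mem_univ, if_true]
    have h1 := hmono _ _ hsub
    have h2 : 0 ≤ Pout n B x (E.symm (none, g2)) ⟨k', b⟩ := Pout_nonneg n B x hx _ _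
    nlinarith
  · apply Finset.sum_nonneg
    intro e _
    rw [dso_ne n ⟨k, m⟩ k' (e ⟨k', b⟩) hk, mul_zero, mul_zero]

end Multinoulli
end
end

section
/- If the set function f : 2^V → ℝ≥0 is monotone and α-weakly DR-submodular for some α ∈ (0,1], then every stationary point (p_1,…,p_K) of its Multinoulli Extension F over the domain ∏_{k=1}^K Δ_{n_k} satisfies F(p_1,…,p_K) ≥ (α²/(1+α²))·f(S) for every feasible subset S ⊆ V. -/
open Finset

noncomputable section

namespace Multinoulli

variable {K : ℕ}

namespace Aux

variable (n B : Fin K → ℕ)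

/-- Product of the probabilities of all slots except `s`. -/
def probEx (x : Elem n → ℝ) (s : Slot B) (e : Choice n B) : ℝ :=
  ∏ s' ∈ Finset.univ.erase s, prob n x s'.1 (e s')

/-- The set chosen by all slots except `s`. -/
def rest (s : Slot B) (e : Choice n B) : Finset (Elem n) :=
  chosen n B e (Finset.univ.erase s)

lemma chosen_congr (e1 e2 : Choice n B) (A : Finset (Slot B)) (h : ∀ s ∈ A, e1 s = e2 s) :
    chosen n B e1 A = chosen n B e2 A :=
  Finset.biUnion_congr rfl fun s hs => by rw [h s hs]

lemma chosen_mono (e : Choice n B) {A A' : Finset (Slot B)} (h : A ⊆ A') :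
    chosen n B e A ⊆ chosen n B e A' :=
  Finset.biUnion_subset_biUnion_of_subset_left _ h

lemma chosen_split {e : Choice n B} {A : Finset (Slot B)} {s : Slot B} (hs : s ∈ A) :
    chosen n B e A = ((e s).map fun m => (⟨s.1, m⟩ : Elem n)).toFinset ∪ chosen n B e (A.erase s) := by
  conv_lhs => rw [← Finset.insert_erase hs]
  rw [chosen, Finset.biUnion_insert]
  rfl

lemma chosen_none {e : Choice n B} {A : Finset (Slot B)} {s : Slot B} (hs : s ∈ A)
    (h : e s = none) : chosen n B e A = chosen n B e (A.erase s) := by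
  rw [chosen_split n B hs, h]
  simp

lemma chosen_some {e : Choice n B} {A : Finset (Slot B)} {s : Slot B} (hs : s ∈ A)
    {m : Fin (n s.1)} (h : e s = some m) :
    chosen n B e A = insert (⟨s.1, m⟩ : Elem n) (chosen n B e (A.erase s)) := by
  rw [chosen_split n B hs, h]
  exact (Finset.insert_eq _ _).symm

lemma rest_update (s : Slot B) (e : Choice n B) (o : Option (Fin (n s.1))) :
    rest n B s (Function.update e s o) = rest n B s e :=
  chosen_congr n B _ _ _ fun s' hs' => Function.update_of_ne (Finset.mem_erase.1 hs').1 _ _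

lemma probEx_update (x : Elem n → ℝ) (s : Slot B) (e : Choice n B) (o : Option (Fin (n s.1))) :
    probEx n B x s (Function.update e s o) = probEx n B x s e :=
  Finset.prod_congr rfl fun s' hs' => by
    rw [Function.update_of_ne (Finset.mem_erase.1 hs').1]

lemma chosen_univ_none {e : Choice n B} {s : Slot B} (h : e s = none) :
    chosen n B e Finset.univ = rest n B s e :=
  chosen_none n B (Finset.mem_univ s) h

lemma chosen_univ_some {e : Choice n B} {s : Slot B} {m : Fin (n s.1)} (h : e s = some m) :
    chosen n B e Finset.univ = insert (⟨s.1, m⟩ : Elem n) (rest n B s e) :=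
  chosen_some n B (Finset.mem_univ s) h

lemma split_sum (s : Slot B) (G : Choice n B → ℝ) :
    ∑ e : Choice n B, G e =
      ∑ e ∈ Finset.univ.filter (fun e : Choice n B => e s = none),
        ∑ o : Option (Fin (n s.1)), G (Function.update e s o) := by
  have h1 : ∀ o : Option (Fin (n s.1)),
      ∑ e ∈ Finset.univ.filter (fun e : Choice n B => e s = o), G e
      = ∑ e ∈ Finset.univ.filter (fun e : Choice n B => e s = none),
          G (Function.update e s o) := by
    intro o
    refine Finset.sum_nbij' (fun e => Function.update e s none)
      (fun e => Function.update e s o) ?_ ?_ ?_ ?_ ?_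
    · intro a _; simp
    · intro a _; simp
    · intro a ha
      rw [Finset.mem_filter] at ha
      show Function.update (Function.update a s none) s o = a
      rw [Function.update_idem, ← ha.2, Function.update_eq_self]
    · intro a ha
      rw [Finset.mem_filter] at ha
      show Function.update (Function.update a s o) s none = a
      rw [Function.update_idem, ← ha.2, Function.update_eq_self]
    · intro a ha
      rw [Finset.mem_filter] at ha
      show G a = G (Function.update (Function.update a s none) s o)
      rw [Function.update_idem, ← ha.2, Function.update_eq_self]
  calc ∑ e : Choice n B, G e
      = ∑ o : Option (Fin (n s.1)), ∑ e ∈ Finset.univ.filter (fun e : Choice n B => e s = o), G e :=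
        (Finset.sum_fiberwise _ _ _).symm
    _ = ∑ o : Option (Fin (n s.1)), ∑ e ∈ Finset.univ.filter (fun e : Choice n B => e s = none),
          G (Function.update e s o) := Finset.sum_congr rfl fun o _ => h1 o
    _ = _ := Finset.sum_comm

lemma sum_prob_eq_one (x : Elem n → ℝ) (k : Fin K) :
    ∑ o : Option (Fin (n k)), prob n x k o = 1 := by
  rw [Fintype.sum_option]
  show (1 - ∑ m : Fin (n k), x ⟨k, m⟩) + ∑ m : Fin (n k), x ⟨k, m⟩ = 1
  ring

lemma sum_filter_shift (s : Slot B) (o₀ : Option (Fin (n s.1))) (H : Choice n B → ℝ)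
    (hH : ∀ e o, H (Function.update e s o) = H e) :
    ∑ e ∈ Finset.univ.filter (fun e : Choice n B => e s = o₀), H e
      = ∑ e ∈ Finset.univ.filter (fun e : Choice n B => e s = none), H e := by
  refine Finset.sum_nbij' (fun e => Function.update e s none)
    (fun e => Function.update e s o₀) ?_ ?_ ?_ ?_ ?_
  · intro a _; simp
  · intro a _; simp
  · intro a ha
    rw [Finset.mem_filter] at ha
    show Function.update (Function.update a s none) s o₀ = a
    rw [Function.update_idem, ← ha.2, Function.update_eq_self]
  · intro a ha
    rw [Finset.mem_filter] at ha
    show Function.update (Function.update a s o₀) s none = a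
    rw [Function.update_idem, ← ha.2, Function.update_eq_self]
  · intro a _
    show H a = H (Function.update a s none)
    rw [hH]

lemma resum (x : Elem n → ℝ) (s : Slot B) (H : Choice n B → ℝ)
    (hH : ∀ e o, H (Function.update e s o) = H e) :
    ∑ e ∈ Finset.univ.filter (fun e : Choice n B => e s = none), H e * probEx n B x s e
      = ∑ e : Choice n B, H e * jointProb n B x e := by
  symm
  have key : ∀ e : Choice n B, H e * jointProb n B x e
      = H e * (prob n x s.1 (e s) * probEx n B x s e) := by
    intro e
    rw [jointProb, ← Finset.mul_prod_erase Finset.univ _ (Finset.mem_univ s)]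
    rfl
  calc ∑ e : Choice n B, H e * jointProb n B x e
      = ∑ e : Choice n B, H e * (prob n x s.1 (e s) * probEx n B x s e) :=
        Finset.sum_congr rfl fun e _ => key e
    _ = ∑ e ∈ Finset.univ.filter (fun e : Choice n B => e s = none),
          ∑ o : Option (Fin (n s.1)), H (Function.update e s o) *
            (prob n x s.1 (Function.update e s o s) * probEx n B x s (Function.update e s o)) :=
        split_sum n B s _
    _ = ∑ e ∈ Finset.univ.filter (fun e : Choice n B => e s = none),
          H e * probEx n B x s e := by
        refine Finset.sum_congr rfl fun e _ => ?_
        have : ∀ o : Option (Fin (n s.1)),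
            H (Function.update e s o) *
              (prob n x s.1 (Function.update e s o s) * probEx n B x s (Function.update e s o))
            = H e * probEx n B x s e * prob n x s.1 o := by
          intro o
          rw [hH, Function.update_self, probEx_update]
          ring
        rw [Finset.sum_congr rfl fun o _ => this o, ← Finset.mul_sum, sum_prob_eq_one, mul_one]


def slope (i : Elem n) (k : Fin K) : Option (Fin (n k)) → ℝ
  | some m' => if (⟨k, m'⟩ : Elem n) = i then 1 else 0
  | none => if k = i.1 then -1 else 0

lemma hasDerivAt_prob (x : Elem n → ℝ) (i : Elem n) (k : Fin K) (o : Option (Fin (n k))) (t : ℝ) :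
    HasDerivAt (fun t => prob n (Function.update x i t) k o) (slope n i k o) t := by
  obtain ⟨ik, im⟩ := i
  cases o with
  | some m' =>
    have h : (fun t => prob n (Function.update x ⟨ik, im⟩ t) k (some m'))
        = fun t => if (⟨k, m'⟩ : Elem n) = ⟨ik, im⟩ then t else x ⟨k, m'⟩ := by
      funext t
      show Function.update x ⟨ik, im⟩ t ⟨k, m'⟩ = _
      rw [Function.update_apply]
    rw [h]
    by_cases hc : (⟨k, m'⟩ : Elem n) = ⟨ik, im⟩
    · simp only [slope, if_pos hc]
      exact hasDerivAt_id t
    · simp only [slope, if_neg hc]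
      exact hasDerivAt_const t _
  | none =>
    have h : (fun t => prob n (Function.update x ⟨ik, im⟩ t) k none)
        = fun t => 1 - ∑ m' : Fin (n k),
            (if (⟨k, m'⟩ : Elem n) = ⟨ik, im⟩ then t else x ⟨k, m'⟩) := by
      funext t
      show 1 - ∑ m' : Fin (n k), Function.update x ⟨ik, im⟩ t ⟨k, m'⟩ = _
      rw [Finset.sum_congr rfl fun m' _ => Function.update_apply x _ _ _]
    rw [h]
    have hsum : ∀ t : ℝ, HasDerivAt
        (fun t => ∑ m' : Fin (n k), (if (⟨k, m'⟩ : Elem n) = ⟨ik, im⟩ then t else x ⟨k, m'⟩))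
        (∑ m' : Fin (n k), (if (⟨k, m'⟩ : Elem n) = ⟨ik, im⟩ then (1:ℝ) else 0)) t := by
      intro t
      apply HasDerivAt.fun_sum
      intro m' _
      by_cases hc : (⟨k, m'⟩ : Elem n) = ⟨ik, im⟩
      · simp only [if_pos hc]; exact hasDerivAt_id t
      · simp only [if_neg hc]; exact hasDerivAt_const t _
    have hval : (∑ m' : Fin (n k), (if (⟨k, m'⟩ : Elem n) = ⟨ik, im⟩ then (1:ℝ) else 0))
        = if k = ik then 1 else 0 := by
      by_cases hk : k = ik
      · subst hk
        have : ∀ m' : Fin (n k), ((⟨k, m'⟩ : Elem n) = ⟨k, im⟩) ↔ (m' = im) := by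
          intro m'; simp
        rw [Finset.sum_congr rfl fun m' _ => by rw [if_congr (this m') rfl rfl]]
        simp [Finset.sum_ite_eq']
      · have : ∀ m' : Fin (n k), ((⟨k, m'⟩ : Elem n) = ⟨ik, im⟩) ↔ False := by
          intro m'
          constructor
          · intro hc; exact hk (congrArg Sigma.fst hc)
          · exact False.elim
        rw [Finset.sum_congr rfl fun m' _ => by rw [if_congr (this m') rfl rfl]]
        simp [hk]
    have := (hasDerivAt_const t (1:ℝ)).fun_sub (hsum t)
    rw [hval] at this
    refine this.congr_deriv (Eq.symm ?_)
    show slope n ⟨ik, im⟩ k none = 0 - if k = ik then 1 else 0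
    by_cases hk : k = ik <;> simp [slope, hk]


lemma pderiv_ME (f : Finset (Elem n) → ℝ) (x : Elem n → ℝ) (i : Elem n) :
    pderiv n (ME n B f) i x =
      ∑ e : Choice n B, f (chosen n B e Finset.univ) *
        ∑ s : Slot B, probEx n B x s e * slope n i s.1 (e s) := by
  have h : HasDerivAt (fun t => ME n B f (Function.update x i t))
      (∑ e : Choice n B, f (chosen n B e Finset.univ) *
        ∑ s : Slot B, probEx n B x s e * slope n i s.1 (e s)) (x i) := by
    have h2 : ∀ e : Choice n B,
        HasDerivAt (fun t => f (chosen n B e Finset.univ) *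
            ∏ s : Slot B, prob n (Function.update x i t) s.1 (e s))
          (f (chosen n B e Finset.univ) *
            ∑ s : Slot B, probEx n B x s e * slope n i s.1 (e s)) (x i) := by
      intro e
      have hp : HasDerivAt (fun t => ∏ s : Slot B, prob n (Function.update x i t) s.1 (e s))
          (∑ s : Slot B, (∏ s' ∈ Finset.univ.erase s,
              prob n (Function.update x i (x i)) s'.1 (e s')) • slope n i s.1 (e s)) (x i) :=
        HasDerivAt.fun_finsetProd fun s _ => hasDerivAt_prob n x i s.1 (e s) (x i)
      rw [Function.update_eq_self] at hp
      have : (∑ s : Slot B, (∏ s' ∈ Finset.univ.erase s, prob n x s'.1 (e s')) •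
          slope n i s.1 (e s)) = ∑ s : Slot B, probEx n B x s e * slope n i s.1 (e s) :=
        Finset.sum_congr rfl fun s _ => by rw [smul_eq_mul]; rfl
      rw [this] at hp
      exact hp.const_mul _
    have := HasDerivAt.fun_sum (u := Finset.univ) fun e _ => h2 e
    simpa only [ME, jointProb] using this
  exact h.deriv


lemma pderiv_ME_eq (f : Finset (Elem n) → ℝ) (x : Elem n → ℝ) (i : Elem n) :
    pderiv n (ME n B f) i x =
      ∑ s : Slot B, (if s.1 = i.1 then
        ∑ e : Choice n B, (f (insert i (rest n B s e)) - f (rest n B s e)) * jointProb n B x e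
      else 0) := by
  rw [pderiv_ME]
  rw [show (∑ e : Choice n B, f (chosen n B e Finset.univ) *
        ∑ s : Slot B, probEx n B x s e * slope n i s.1 (e s))
      = ∑ s : Slot B, ∑ e : Choice n B, f (chosen n B e Finset.univ) *
          (probEx n B x s e * slope n i s.1 (e s)) from by
    rw [Finset.sum_comm]
    exact Finset.sum_congr rfl fun e _ => Finset.mul_sum _ _ _]
  refine Finset.sum_congr rfl fun s _ => ?_
  obtain ⟨ik, im⟩ := i
  obtain ⟨sk, sb⟩ := s
  by_cases hk : sk = ik
  · subst hk
    rw [if_pos rfl]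
    have hslope : ∀ o : Option (Fin (n sk)), slope n ⟨sk, im⟩ sk o
        = (if o = some im then 1 else 0) - (if o = none then 1 else 0) := by
      rintro (_ | m')
      · simp [slope]
      · by_cases h : m' = im <;> simp [slope, h]
    have step1 : ∀ e : Choice n B,
        f (chosen n B e Finset.univ) *
          (probEx n B x (⟨sk, sb⟩ : Slot B) e * slope n ⟨sk, im⟩ sk (e ⟨sk, sb⟩))
        = (if e ⟨sk, sb⟩ = some im
            then f (chosen n B e Finset.univ) * probEx n B x (⟨sk, sb⟩ : Slot B) e else 0)
          - (if e ⟨sk, sb⟩ = none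
            then f (chosen n B e Finset.univ) * probEx n B x (⟨sk, sb⟩ : Slot B) e else 0) := by
      intro e
      rw [hslope]
      by_cases h1 : e ⟨sk, sb⟩ = some im <;> by_cases h2 : e ⟨sk, sb⟩ = none <;>
        simp [h1, h2] <;> ring
    rw [Finset.sum_congr rfl fun e _ => step1 e, Finset.sum_sub_distrib,
      ← Finset.sum_filter, ← Finset.sum_filter]
    have hA : ∑ e ∈ Finset.univ.filter (fun e : Choice n B => e ⟨sk, sb⟩ = some im),
          f (chosen n B e Finset.univ) * probEx n B x (⟨sk, sb⟩ : Slot B) e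
        = ∑ e : Choice n B,
            f (insert (⟨sk, im⟩ : Elem n) (rest n B (⟨sk, sb⟩ : Slot B) e)) * jointProb n B x e := by
      have e1 : ∑ e ∈ Finset.univ.filter (fun e : Choice n B => e ⟨sk, sb⟩ = some im),
            f (chosen n B e Finset.univ) * probEx n B x (⟨sk, sb⟩ : Slot B) e
          = ∑ e ∈ Finset.univ.filter (fun e : Choice n B => e ⟨sk, sb⟩ = some im),
            f (insert (⟨sk, im⟩ : Elem n) (rest n B (⟨sk, sb⟩ : Slot B) e)) *
              probEx n B x (⟨sk, sb⟩ : Slot B) e := by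
        refine Finset.sum_congr rfl fun e he => ?_
        rw [Finset.mem_filter] at he
        rw [chosen_univ_some n B he.2]
      rw [e1, sum_filter_shift n B (⟨sk, sb⟩ : Slot B) (some im) _
        (fun e o => by rw [rest_update, probEx_update]),
        resum n B x (⟨sk, sb⟩ : Slot B) _ (fun e o => by rw [rest_update])]
    have hB : ∑ e ∈ Finset.univ.filter (fun e : Choice n B => e ⟨sk, sb⟩ = none),
          f (chosen n B e Finset.univ) * probEx n B x (⟨sk, sb⟩ : Slot B) e
        = ∑ e : Choice n B, f (rest n B (⟨sk, sb⟩ : Slot B) e) * jointProb n B x e := by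
      have e1 : ∑ e ∈ Finset.univ.filter (fun e : Choice n B => e ⟨sk, sb⟩ = none),
            f (chosen n B e Finset.univ) * probEx n B x (⟨sk, sb⟩ : Slot B) e
          = ∑ e ∈ Finset.univ.filter (fun e : Choice n B => e ⟨sk, sb⟩ = none),
            f (rest n B (⟨sk, sb⟩ : Slot B) e) * probEx n B x (⟨sk, sb⟩ : Slot B) e := by
        refine Finset.sum_congr rfl fun e he => ?_
        rw [Finset.mem_filter] at he
        rw [chosen_univ_none n B he.2]
      rw [e1, resum n B x (⟨sk, sb⟩ : Slot B) _ (fun e o => by rw [rest_update])]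
    rw [hA, hB, ← Finset.sum_sub_distrib]
    exact Finset.sum_congr rfl fun e _ => by ring
  · rw [if_neg hk]
    refine Finset.sum_eq_zero fun e _ => ?_
    have : slope n ⟨ik, im⟩ sk (e ⟨sk, sb⟩) = 0 := by
      cases h : e ⟨sk, sb⟩ with
      | none => simp [slope, hk]
      | some m' =>
        have : ¬ ((⟨sk, m'⟩ : Elem n) = ⟨ik, im⟩) := fun hc => hk (congrArg Sigma.fst hc)
        simp [slope, this]
    rw [this, mul_zero, mul_zero]


lemma sum_x_slope (x : Elem n → ℝ) (k : Fin K) (o : Option (Fin (n k))) :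
    (∑ i : Elem n, x i * slope n i k o) = prob n x k o - (if o = none then 1 else 0) := by
  cases o with
  | some m' =>
    have : ∀ i : Elem n, x i * slope n i k (some m')
        = if (⟨k, m'⟩ : Elem n) = i then x i else 0 := by
      intro i
      by_cases h : (⟨k, m'⟩ : Elem n) = i <;> simp [slope, h]
    rw [Finset.sum_congr rfl fun i _ => this i, Finset.sum_ite_eq]
    simp [prob]
  | none =>
    have key : (∑ i : Elem n, x i * slope n i k none)
        = ∑ kk : Fin K, ∑ m : Fin (n kk), x ⟨kk, m⟩ * slope n ⟨kk, m⟩ k none := by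
      rw [← Finset.univ_sigma_univ, Finset.sum_sigma]
    rw [key]
    have inner : ∀ kk : Fin K, (∑ m : Fin (n kk), x ⟨kk, m⟩ * slope n ⟨kk, m⟩ k none)
        = if k = kk then -∑ m : Fin (n kk), x ⟨kk, m⟩ else 0 := by
      intro kk
      by_cases h : k = kk
      · rw [if_pos h]
        rw [← Finset.sum_neg_distrib]
        refine Finset.sum_congr rfl fun m _ => ?_
        simp [slope, h]
      · rw [if_neg h]
        refine Finset.sum_eq_zero fun m _ => ?_
        simp [slope, h]
    rw [Finset.sum_congr rfl fun kk _ => inner kk, Finset.sum_ite_eq]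
    simp only [Finset.mem_univ, if_pos, if_true]
    show _ = (1 - ∑ m : Fin (n k), x ⟨k, m⟩) - 1
    ring

lemma prob_mul_probEx (x : Elem n → ℝ) (s : Slot B) (e : Choice n B) :
    prob n x s.1 (e s) * probEx n B x s e = jointProb n B x e := by
  rw [jointProb, ← Finset.mul_prod_erase Finset.univ _ (Finset.mem_univ s)]
  rfl

lemma inner_x_grad (f : Finset (Elem n) → ℝ) (x : Elem n → ℝ) :
    inner' n x (grad n (ME n B f) x) =
      ∑ e : Choice n B,
        (∑ s : Slot B, (f (chosen n B e Finset.univ) - f (rest n B s e))) * jointProb n B x e := by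
  have hthis : ∀ i : Elem n, x i * grad n (ME n B f) x i
      = ∑ e : Choice n B, ∑ s : Slot B, f (chosen n B e Finset.univ) *
          (probEx n B x s e * (x i * slope n i s.1 (e s))) := by
    intro i
    rw [grad, pderiv_ME, Finset.mul_sum]
    refine Finset.sum_congr rfl fun e _ => ?_
    rw [Finset.mul_sum, Finset.mul_sum]
    refine Finset.sum_congr rfl fun s _ => ?_
    ring
  have step2 : ∀ s : Slot B, (∑ e : Choice n B, f (chosen n B e Finset.univ) *
        (probEx n B x s e * (∑ i : Elem n, x i * slope n i s.1 (e s))))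
      = ∑ e : Choice n B,
          (f (chosen n B e Finset.univ) - f (rest n B s e)) * jointProb n B x e := by
    intro s
    have e1 : ∀ e : Choice n B, f (chosen n B e Finset.univ) *
          (probEx n B x s e * (∑ i : Elem n, x i * slope n i s.1 (e s)))
        = f (chosen n B e Finset.univ) * jointProb n B x e
          - (if e s = none then f (chosen n B e Finset.univ) * probEx n B x s e else 0) := by
      intro e
      rw [sum_x_slope, ← prob_mul_probEx n B x s e]
      by_cases h : e s = none
      · rw [if_pos h, if_pos h]; ring
      · rw [if_neg h, if_neg h]; ring
    rw [Finset.sum_congr rfl fun e _ => e1 e, Finset.sum_sub_distrib, ← Finset.sum_filter]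
    have e2 : ∑ e ∈ Finset.univ.filter (fun e : Choice n B => e s = none),
          f (chosen n B e Finset.univ) * probEx n B x s e
        = ∑ e : Choice n B, f (rest n B s e) * jointProb n B x e := by
      have e3 : ∑ e ∈ Finset.univ.filter (fun e : Choice n B => e s = none),
            f (chosen n B e Finset.univ) * probEx n B x s e
          = ∑ e ∈ Finset.univ.filter (fun e : Choice n B => e s = none),
            f (rest n B s e) * probEx n B x s e := by
        refine Finset.sum_congr rfl fun e he => ?_
        rw [Finset.mem_filter] at he
        rw [chosen_univ_none n B he.2]
      rw [e3, resum n B x s _ (fun e o => by rw [rest_update])]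
    rw [e2, ← Finset.sum_sub_distrib]
    exact Finset.sum_congr rfl fun e _ => by ring
  calc inner' n x (grad n (ME n B f) x)
      = ∑ i : Elem n, ∑ e : Choice n B, ∑ s : Slot B, f (chosen n B e Finset.univ) *
          (probEx n B x s e * (x i * slope n i s.1 (e s))) :=
        Finset.sum_congr rfl fun i _ => hthis i
    _ = ∑ e : Choice n B, ∑ i : Elem n, ∑ s : Slot B, f (chosen n B e Finset.univ) *
          (probEx n B x s e * (x i * slope n i s.1 (e s))) := Finset.sum_comm
    _ = ∑ e : Choice n B, ∑ s : Slot B, ∑ i : Elem n, f (chosen n B e Finset.univ) *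
          (probEx n B x s e * (x i * slope n i s.1 (e s))) :=
        Finset.sum_congr rfl fun e _ => Finset.sum_comm
    _ = ∑ s : Slot B, ∑ e : Choice n B, ∑ i : Elem n, f (chosen n B e Finset.univ) *
          (probEx n B x s e * (x i * slope n i s.1 (e s))) := Finset.sum_comm
    _ = ∑ s : Slot B, ∑ e : Choice n B, f (chosen n B e Finset.univ) *
          (probEx n B x s e * (∑ i : Elem n, x i * slope n i s.1 (e s))) := by
        refine Finset.sum_congr rfl fun s _ => Finset.sum_congr rfl fun e _ => ?_
        rw [← Finset.mul_sum, ← Finset.mul_sum]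
    _ = ∑ s : Slot B, ∑ e : Choice n B,
          (f (chosen n B e Finset.univ) - f (rest n B s e)) * jointProb n B x e :=
        Finset.sum_congr rfl fun s _ => step2 s
    _ = ∑ e : Choice n B, ∑ s : Slot B,
          (f (chosen n B e Finset.univ) - f (rest n B s e)) * jointProb n B x e :=
        Finset.sum_comm
    _ = ∑ e : Choice n B,
          (∑ s : Slot B, (f (chosen n B e Finset.univ) - f (rest n B s e))) * jointProb n B x e :=
        Finset.sum_congr rfl fun e _ => (Finset.sum_mul _ _ _).symm

lemma jointProb_nonneg {x : Elem n → ℝ} (hx : InSimplex n x) (e : Choice n B) :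
    0 ≤ jointProb n B x e := by
  refine Finset.prod_nonneg fun s _ => ?_
  cases h : e s with
  | some m => exact hx.1 ⟨s.1, m⟩
  | none =>
    show (0:ℝ) ≤ 1 - ∑ m : Fin (n s.1), x ⟨s.1, m⟩
    linarith [hx.2 s.1]

lemma sum_jointProb (x : Elem n → ℝ) : ∑ e : Choice n B, jointProb n B x e = 1 := by
  have h := Finset.prod_univ_sum (fun s : Slot B => (Finset.univ : Finset (Option (Fin (n s.1)))))
    (fun s o => prob n x s.1 o)
  rw [Fintype.piFinset_univ] at h
  simp only [jointProb]
  calc ∑ e : Choice n B, ∏ s : Slot B, prob n x s.1 (e s)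
      = ∏ s : Slot B, ∑ o : Option (Fin (n s.1)), prob n x s.1 o := h.symm
    _ = ∏ s : Slot B, (1:ℝ) := Finset.prod_congr rfl fun s _ => sum_prob_eq_one n x s.1
    _ = 1 := Finset.prod_const_one

lemma sum_slot_ite (k : Fin K) (c : ℝ) :
    (∑ s : Slot B, if s.1 = k then c else 0) = (B k : ℝ) * c := by
  rw [← Finset.univ_sigma_univ, Finset.sum_sigma]
  have inner : ∀ k' : Fin K, (∑ b : Fin (B k'), if (⟨k', b⟩ : Slot B).1 = k then c else 0)
      = if k' = k then (B k' : ℝ) * c else 0 := by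
    intro k'
    by_cases h : k' = k
    · simp [h, Finset.sum_const, nsmul_eq_mul]
    · simp [h]
  rw [Finset.sum_congr rfl fun k' _ => inner k', Finset.sum_ite_eq' Finset.univ k]
  simp

lemma lemmaP (f : Finset (Elem n) → ℝ) (α : ℝ)
    (hmono : ∀ A C : Finset (Elem n), A ⊆ C → f A ≤ f C)
    (hDR : ∀ A C : Finset (Elem n), A ⊆ C → ∀ v ∉ C,
      α * (f (insert v C) - f C) ≤ f (insert v A) - f A)
    (e : Choice n B) (A : Finset (Slot B)) :
    α * ∑ s ∈ A, (f (chosen n B e Finset.univ) - f (rest n B s e))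
      ≤ f (chosen n B e Finset.univ) - f (chosen n B e (Finset.univ \ A)) := by
  induction A using Finset.induction_on with
  | empty => simp
  | @insert s A' hs ih =>
    rw [Finset.sum_insert hs, mul_add, Finset.sdiff_insert]
    have hsC : s ∈ Finset.univ \ A' := Finset.mem_sdiff.2 ⟨Finset.mem_univ s, hs⟩
    have hCsub : (Finset.univ \ A').erase s ⊆ Finset.univ.erase s :=
      Finset.erase_subset_erase s (Finset.sdiff_subset)
    have key : α * (f (chosen n B e Finset.univ) - f (rest n B s e))
        ≤ f (chosen n B e (Finset.univ \ A')) - f (chosen n B e ((Finset.univ \ A').erase s)) := by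
      cases h : e s with
      | none =>
        rw [chosen_univ_none n B h, sub_self, mul_zero,
          chosen_none n B hsC h]
        rw [sub_self]
      | some m =>
        rw [chosen_univ_some n B h, chosen_some n B hsC h]
        by_cases hv : (⟨s.1, m⟩ : Elem n) ∈ rest n B s e
        · rw [Finset.insert_eq_self.2 hv, sub_self, mul_zero, sub_nonneg]
          exact hmono _ _ (Finset.subset_insert _ _)
        · exact hDR _ _ (chosen_mono n B e hCsub) _ hv
    linarith [ih]

lemma lemmaQ (f : Finset (Elem n) → ℝ) (α : ℝ)
    (R : Finset (Elem n)) (g : Elem n → ℝ)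
    (hg0 : ∀ i : Elem n, 0 ≤ g i)
    (hg : ∀ i : Elem n, ∀ C : Finset (Elem n), R ⊆ C → i ∉ C →
      α * (f (insert i C) - f C) ≤ g i)
    (T : Finset (Elem n)) :
    α * (f (R ∪ T) - f R) ≤ ∑ i ∈ T, g i := by
  induction T using Finset.induction_on with
  | empty => simp
  | @insert j T' hj ih =>
    rw [Finset.sum_insert hj, Finset.union_insert]
    have expand : α * (f (insert j (R ∪ T')) - f R)
        = α * (f (insert j (R ∪ T')) - f (R ∪ T')) + α * (f (R ∪ T') - f R) := by ring
    have first : α * (f (insert j (R ∪ T')) - f (R ∪ T')) ≤ g j := by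
      by_cases hjm : j ∈ R ∪ T'
      · rw [Finset.insert_eq_self.2 hjm, sub_self, mul_zero]; exact hg0 j
      · exact hg j (R ∪ T') Finset.subset_union_left hjm
    linarith [ih]

end Aux

theorem multinoulliExtension_stationary_dr {K : ℕ} (n B : Fin K → ℕ) (hn : ∀ k, 1 ≤ n k)
    (hB : ∀ k, 0 < B k) (hBn : ∀ k, B k ≤ n k)
    (f : Finset (Elem n) → ℝ) (hf0 : ∀ S, 0 ≤ f S)
    (hmono : MonotoneSet n f)
    (α : ℝ) (hα0 : 0 < α) (hα1 : α ≤ 1) (hDR : WeaklyDR n f α)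
    (x : Elem n → ℝ) (hx : InSimplex n x)
    (hstat : ∀ y : Elem n → ℝ, InSimplex n y →
      inner' n (fun i => y i - x i) (grad n (ME n B f) x) ≤ 0)
    (S : Finset (Elem n)) (hS : Feasible n B S) :
    α ^ 2 / (1 + α ^ 2) * f S ≤ ME n B f x := by
  classical
  have hmono' : ∀ A C : Finset (Elem n), A ⊆ C → f A ≤ f C := hmono
  have hDR' : ∀ A C : Finset (Elem n), A ⊆ C → ∀ v ∉ C,
      α * (f (insert v C) - f C) ≤ f (insert v A) - f A := by
    intro A C hAC v hv
    simpa [marg] using hDR A C hAC v hv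
  -- the scaled indicator vector lies in the product of simplices
  have hsimp : InSimplex n (indVec n B S) := by
    constructor
    · intro i
      unfold indVec
      split
      · positivity
      · exact le_refl 0
    · intro k
      have hinj : (Finset.univ.filter fun m : Fin (n k) => (⟨k, m⟩ : Elem n) ∈ S).card
          ≤ (S.filter fun i : Elem n => i.1 = k).card := by
        refine Finset.card_le_card_of_injOn (fun m => (⟨k, m⟩ : Elem n)) ?_ ?_
        · intro m hm
          rw [Finset.mem_coe, Finset.mem_filter] at hm ⊢
          exact ⟨hm.2, rfl⟩
        · intro a _ b _ hab
          simpa using hab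
      have hcard : ((Finset.univ.filter fun m : Fin (n k) => (⟨k, m⟩ : Elem n) ∈ S).card : ℝ)
          ≤ (B k : ℝ) := by
        exact_mod_cast le_trans hinj (hS k)
      have hrw : ∀ m : Fin (n k), indVec n B S ⟨k, m⟩
          = if (⟨k, m⟩ : Elem n) ∈ S then (B k : ℝ)⁻¹ else 0 := fun m => rfl
      calc ∑ m : Fin (n k), indVec n B S ⟨k, m⟩
          = ∑ m ∈ Finset.univ.filter (fun m : Fin (n k) => (⟨k, m⟩ : Elem n) ∈ S),
              (B k : ℝ)⁻¹ := by
            rw [Finset.sum_congr rfl fun m _ => hrw m, ← Finset.sum_filter]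
        _ = ((Finset.univ.filter fun m : Fin (n k) => (⟨k, m⟩ : Elem n) ∈ S).card : ℝ)
              * (B k : ℝ)⁻¹ := by
            rw [Finset.sum_const, nsmul_eq_mul]
        _ ≤ (B k : ℝ) * (B k : ℝ)⁻¹ := mul_le_mul_of_nonneg_right hcard (by positivity)
        _ = 1 := mul_inv_cancel₀ (by exact_mod_cast (hB k).ne')
  -- stationarity
  have hyx : inner' n (indVec n B S) (grad n (ME n B f) x)
      ≤ inner' n x (grad n (ME n B f) x) := by
    have h0 := hstat (indVec n B S) hsimp
    have hsplit : inner' n (fun i => indVec n B S i - x i) (grad n (ME n B f) x)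
        = inner' n (indVec n B S) (grad n (ME n B f) x)
          - inner' n x (grad n (ME n B f) x) := by
      simp only [inner', sub_mul, Finset.sum_sub_distrib]
    rw [hsplit] at h0
    linarith
  -- upper bound on ⟨x, ∇F(x)⟩
  have hup : α * inner' n x (grad n (ME n B f) x) ≤ ME n B f x := by
    rw [Aux.inner_x_grad n B f x]
    simp only [ME]
    rw [Finset.mul_sum]
    refine Finset.sum_le_sum fun e _ => ?_
    rw [← mul_assoc]
    refine mul_le_mul_of_nonneg_right ?_ (Aux.jointProb_nonneg n B hx e)
    have hp := Aux.lemmaP n B f α hmono' hDR' e Finset.univ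
    rw [Finset.sdiff_self] at hp
    have hempty : chosen n B e (∅ : Finset (Slot B)) = (∅ : Finset (Elem n)) := by
      simp [chosen]
    rw [hempty] at hp
    linarith [hf0 (∅ : Finset (Elem n))]
  -- lower bound on ⟨indVec S, ∇F(x)⟩
  have hDi : ∀ i : Elem n, grad n (ME n B f) x i
      = ∑ e : Choice n B, (∑ s : Slot B, if s.1 = i.1 then
          (f (insert i (Aux.rest n B s e)) - f (Aux.rest n B s e)) else 0)
            * jointProb n B x e := by
    intro i
    show pderiv n (ME n B f) i x = _
    rw [Aux.pderiv_ME_eq n B f x i]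
    calc ∑ s : Slot B, (if s.1 = i.1 then
            ∑ e : Choice n B, (f (insert i (Aux.rest n B s e)) - f (Aux.rest n B s e))
              * jointProb n B x e
          else 0)
        = ∑ s : Slot B, ∑ e : Choice n B, (if s.1 = i.1 then
            (f (insert i (Aux.rest n B s e)) - f (Aux.rest n B s e)) else 0)
              * jointProb n B x e := by
          refine Finset.sum_congr rfl fun s _ => ?_
          by_cases h : s.1 = i.1
          · rw [if_pos h]
            exact Finset.sum_congr rfl fun e _ => by rw [if_pos h]
          · rw [if_neg h]
            symm
            exact Finset.sum_eq_zero fun e _ => by rw [if_neg h, zero_mul]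
      _ = ∑ e : Choice n B, ∑ s : Slot B, (if s.1 = i.1 then
            (f (insert i (Aux.rest n B s e)) - f (Aux.rest n B s e)) else 0)
              * jointProb n B x e := Finset.sum_comm
      _ = _ := Finset.sum_congr rfl fun e _ => (Finset.sum_mul _ _ _).symm
  have hyD : inner' n (indVec n B S) (grad n (ME n B f) x)
      = ∑ e : Choice n B, (∑ i ∈ S, (B i.1 : ℝ)⁻¹ *
          ∑ s : Slot B, (if s.1 = i.1 then
            (f (insert i (Aux.rest n B s e)) - f (Aux.rest n B s e)) else 0))
              * jointProb n B x e := by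
    calc inner' n (indVec n B S) (grad n (ME n B f) x)
        = ∑ i : Elem n, (if i ∈ S then ((B i.1 : ℝ)⁻¹ * grad n (ME n B f) x i) else 0) := by
          simp only [inner', indVec, ite_mul, zero_mul]
      _ = ∑ i ∈ S, (B i.1 : ℝ)⁻¹ * grad n (ME n B f) x i := by
          rw [Finset.sum_ite_mem, Finset.univ_inter]
      _ = ∑ i ∈ S, ∑ e : Choice n B, (B i.1 : ℝ)⁻¹ *
            ((∑ s : Slot B, (if s.1 = i.1 then
              (f (insert i (Aux.rest n B s e)) - f (Aux.rest n B s e)) else 0))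
                * jointProb n B x e) := by
          refine Finset.sum_congr rfl fun i _ => ?_
          rw [hDi i, Finset.mul_sum]
      _ = ∑ e : Choice n B, ∑ i ∈ S, (B i.1 : ℝ)⁻¹ *
            ((∑ s : Slot B, (if s.1 = i.1 then
              (f (insert i (Aux.rest n B s e)) - f (Aux.rest n B s e)) else 0))
                * jointProb n B x e) := Finset.sum_comm
      _ = _ := by
          refine Finset.sum_congr rfl fun e _ => ?_
          rw [Finset.sum_mul]
          exact Finset.sum_congr rfl fun i _ => by ring
  have hlow : α * (f S - ME n B f x)
      ≤ inner' n (indVec n B S) (grad n (ME n B f) x) := by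
    rw [hyD]
    have hfS : (f S : ℝ) = ∑ e : Choice n B, f S * jointProb n B x e := by
      rw [← Finset.mul_sum, Aux.sum_jointProb, mul_one]
    have hexp : α * (f S - ME n B f x)
        = ∑ e : Choice n B, (α * (f S - f (chosen n B e Finset.univ)))
            * jointProb n B x e := by
      simp only [ME]
      rw [show α * ((f S) - ∑ e : Choice n B, f (chosen n B e Finset.univ) * jointProb n B x e)
          = α * ((∑ e : Choice n B, f S * jointProb n B x e)
            - ∑ e : Choice n B, f (chosen n B e Finset.univ) * jointProb n B x e) from by
        rw [← hfS]]
      rw [← Finset.sum_sub_distrib, Finset.mul_sum]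
      exact Finset.sum_congr rfl fun e _ => by ring
    rw [hexp]
    refine Finset.sum_le_sum fun e _ => ?_
    refine mul_le_mul_of_nonneg_right ?_ (Aux.jointProb_nonneg n B hx e)
    have hg0 : ∀ i : Elem n, 0 ≤ (B i.1 : ℝ)⁻¹ *
        ∑ s : Slot B, (if s.1 = i.1 then
          (f (insert i (Aux.rest n B s e)) - f (Aux.rest n B s e)) else 0) := by
      intro i
      refine mul_nonneg (by positivity) (Finset.sum_nonneg fun s _ => ?_)
      by_cases h : s.1 = i.1
      · rw [if_pos h]
        have := hmono' (Aux.rest n B s e) (insert i (Aux.rest n B s e))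
          (Finset.subset_insert _ _)
        linarith
      · rw [if_neg h]
    have hg : ∀ i : Elem n, ∀ C : Finset (Elem n), chosen n B e Finset.univ ⊆ C → i ∉ C →
        α * (f (insert i C) - f C) ≤ (B i.1 : ℝ)⁻¹ *
          ∑ s : Slot B, (if s.1 = i.1 then
            (f (insert i (Aux.rest n B s e)) - f (Aux.rest n B s e)) else 0) := by
      intro i C hRC hiC
      have hrest : ∀ s : Slot B, Aux.rest n B s e ⊆ C := fun s =>
        le_trans (Aux.chosen_mono n B e (Finset.erase_subset _ _)) hRC
      have hterm : ∀ s : Slot B, (if s.1 = i.1 then (α * (f (insert i C) - f C)) else 0)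
          ≤ (if s.1 = i.1 then
            (f (insert i (Aux.rest n B s e)) - f (Aux.rest n B s e)) else 0) := by
        intro s
        by_cases h : s.1 = i.1
        · rw [if_pos h, if_pos h]
          exact hDR' (Aux.rest n B s e) C (hrest s) i hiC
        · rw [if_neg h, if_neg h]
      have hsum := Finset.sum_le_sum fun s (_ : s ∈ Finset.univ) => hterm s
      rw [Aux.sum_slot_ite B i.1 (α * (f (insert i C) - f C))] at hsum
      have hBpos : (0:ℝ) < (B i.1 : ℝ) := by exact_mod_cast hB i.1
      have h2 := mul_le_mul_of_nonneg_left hsum (inv_nonneg.2 hBpos.le)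
      rw [← mul_assoc, inv_mul_cancel₀ hBpos.ne', one_mul] at h2
      exact h2
    have hQ := Aux.lemmaQ n f α (chosen n B e Finset.univ)
      (fun i => (B i.1 : ℝ)⁻¹ *
        ∑ s : Slot B, (if s.1 = i.1 then
          (f (insert i (Aux.rest n B s e)) - f (Aux.rest n B s e)) else 0))
      hg0 hg S
    have hmonoS : f S ≤ f (chosen n B e Finset.univ ∪ S) :=
      hmono' _ _ Finset.subset_union_right
    have hstep : α * (f S - f (chosen n B e Finset.univ))
        ≤ α * (f (chosen n B e Finset.univ ∪ S) - f (chosen n B e Finset.univ)) :=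
      mul_le_mul_of_nonneg_left (by linarith) hα0.le
    exact le_trans hstep hQ
  -- put it all together
  have hchain : α * (α * (f S - ME n B f x)) ≤ ME n B f x :=
    le_trans (mul_le_mul_of_nonneg_left (le_trans hlow hyx) hα0.le) hup
  have hpos : (0:ℝ) < 1 + α ^ 2 := by positivity
  rw [div_mul_eq_mul_div, div_le_iff₀ hpos]
  nlinarith [hchain]


end Multinoulli
end
end
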